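/- For every real p > 1 and integer m ≥ 1, the multiple zeta star value with m repeated arguments satisfies ζ*({p}_m) = (1/m) · ∑_{i=0}^{m-1} ζ*({p}_i) · ζ(pm - pi), where ζ*({p}_0) = 1; similarly the multiple zeta value satisfies ζ({p}_m) = ((-1)^{m-1}/m) · ∑_{i=0}^{m-1} (-1)^i ζ({p}_i) · ζ(pm - pi). -/

import Mathlib

open Finset Filter

/-- Multiple harmonic number (strictly decreasing indices). -/
noncomputable def mh : List ℝ → ℕ → ℝ
  | [], _ => 1
  | s :: t, n => ∑ k ∈ Finset.Icc 1 n, (1 / (k : ℝ) ^ s) * mh t (k - 1)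

/-- Multiple harmonic star number (weakly decreasing indices). -/
noncomputable def mhStar : List ℝ → ℕ → ℝ
  | [], _ => 1
  | s :: t, n => ∑ k ∈ Finset.Icc 1 n, (1 / (k : ℝ) ^ s) * mhStar t k

/-- Multiple zeta value. -/
noncomputable def mzv : List ℝ → ℝ
  | [] => 1
  | s :: t => ∑' k : ℕ, (1 / ((k : ℝ) + 1) ^ s) * mh t k

/-- Multiple zeta star value. -/
noncomputable def mzvStar : List ℝ → ℝ
  | [] => 1
  | s :: t => ∑' k : ℕ, (1 / ((k : ℝ) + 1) ^ s) * mhStar t (k + 1)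

/-- Riemann zeta value (real series). -/
noncomputable def rz (s : ℝ) : ℝ := ∑' n : ℕ, 1 / ((n : ℝ) + 1) ^ s



noncomputable def Ef (x : ℕ → ℝ) : ℕ → ℕ → ℝ
  | 0, _ => 1
  | _+1, 0 => 0
  | m+1, n+1 => Ef x (m+1) n + x (n+1) * Ef x m n
  termination_by m n => (m, n)

noncomputable def Hf (x : ℕ → ℝ) : ℕ → ℕ → ℝ
  | 0, _ => 1
  | _+1, 0 => 0
  | m+1, n+1 => Hf x (m+1) n + x (n+1) * Hf x m (n+1)
  termination_by m n => (m, n)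

noncomputable def Pf (x : ℕ → ℝ) (k n : ℕ) : ℝ := ∑ j ∈ Finset.Icc 1 n, x j ^ k

def Dlow (F : ℕ → ℕ → ℝ) : ℕ → ℕ → ℝ
  | 0, _ => 0
  | m+1, n => F m n

lemma Dlow_zero (F : ℕ → ℕ → ℝ) (n : ℕ) : Dlow F 0 n = 0 := rfl
lemma Dlow_succ (F : ℕ → ℕ → ℝ) (m n : ℕ) : Dlow F (m+1) n = F m n := rfl

lemma Ef_zero (x : ℕ → ℝ) (n : ℕ) : Ef x 0 n = 1 := by rw [Ef]
lemma Ef_zero' (x : ℕ → ℝ) (m : ℕ) : Ef x (m+1) 0 = 0 := by rw [Ef]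
lemma Ef_succ (x : ℕ → ℝ) (m n : ℕ) :
    Ef x (m+1) (n+1) = Ef x (m+1) n + x (n+1) * Ef x m n := by rw [Ef]
lemma Hf_zero (x : ℕ → ℝ) (n : ℕ) : Hf x 0 n = 1 := by rw [Hf]
lemma Hf_zero' (x : ℕ → ℝ) (m : ℕ) : Hf x (m+1) 0 = 0 := by rw [Hf]
lemma Hf_succ (x : ℕ → ℝ) (m n : ℕ) :
    Hf x (m+1) (n+1) = Hf x (m+1) n + x (n+1) * Hf x m (n+1) := by rw [Hf]

lemma Ef_succ' (x : ℕ → ℝ) (m n : ℕ) :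
    Ef x m (n+1) = Ef x m n + x (n+1) * Dlow (Ef x) m n := by
  cases m with
  | zero => simp [Ef_zero, Dlow]
  | succ m => rw [Ef_succ]; rfl

lemma Hf_succ' (x : ℕ → ℝ) (m n : ℕ) :
    Hf x m (n+1) = Hf x m n + x (n+1) * Dlow (Hf x) m (n+1) := by
  cases m with
  | zero => simp [Hf_zero, Dlow]
  | succ m => rw [Hf_succ]; rfl

lemma Pf_zero (x : ℕ → ℝ) (k : ℕ) : Pf x k 0 = 0 := by simp [Pf]
lemma Pf_succ (x : ℕ → ℝ) (k n : ℕ) : Pf x k (n+1) = Pf x k n + x (n+1) ^ k := by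
  rw [Pf, Pf, Finset.sum_Icc_succ_top (by omega)]

lemma newtonE (x : ℕ → ℝ) (n : ℕ) : ∀ m : ℕ,
    (m : ℝ) * Ef x m n = ∑ i ∈ range m, (-1 : ℝ)^(m-1-i) * Pf x (m-i) n * Ef x i n := by
  induction n with
  | zero =>
    intro m
    cases m with
    | zero => simp
    | succ M => simp [Ef_zero', Pf_zero]
  | succ n ih =>
    intro m
    cases m with
    | zero => simp
    | succ M =>
      have expand : ∀ i ∈ range (M+1),
          (-1 : ℝ)^(M+1-1-i) * Pf x (M+1-i) (n+1) * Ef x i (n+1)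
          = (-1 : ℝ)^(M-i) * Pf x (M+1-i) n * Ef x i n
          + ((-1 : ℝ)^(M-i) * Pf x (M+1-i) n * Dlow (Ef x) i n) * x (n+1)
          + ((-1 : ℝ)^(M-i) * x (n+1)^(M+1-i) * Ef x i n
            + ((-1 : ℝ)^(M-i) * x (n+1)^(M+1-i) * Dlow (Ef x) i n) * x (n+1)) := by
        intro i _
        rw [Pf_succ, Ef_succ']
        have : M + 1 - 1 - i = M - i := by omega
        rw [this]; ring
      rw [Finset.sum_congr rfl expand, Finset.sum_add_distrib, Finset.sum_add_distrib]
      have h1 : ∑ i ∈ range (M+1), (-1 : ℝ)^(M-i) * Pf x (M+1-i) n * Ef x i n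
          = ((M:ℝ)+1) * Ef x (M+1) n := by
        have := ih (M+1)
        push_cast at this ⊢
        rw [← this]
      have h2 : ∑ i ∈ range (M+1), ((-1 : ℝ)^(M-i) * Pf x (M+1-i) n * Dlow (Ef x) i n) * x (n+1)
          = x (n+1) * ((M:ℝ) * Ef x M n) := by
        rw [Finset.sum_range_succ']
        simp only [Dlow_zero, Dlow_succ, mul_zero, zero_mul, add_zero]
        rw [ih M, Finset.mul_sum]
        apply Finset.sum_congr rfl
        intro i _
        have e1 : M - (i+1) = M - 1 - i := by omega
        have e2 : M + 1 - (i+1) = M - i := by omega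
        rw [e1, e2]; ring
      have h3 : ∑ i ∈ range (M+1), ((-1 : ℝ)^(M-i) * x (n+1)^(M+1-i) * Ef x i n
            + ((-1 : ℝ)^(M-i) * x (n+1)^(M+1-i) * Dlow (Ef x) i n) * x (n+1))
          = x (n+1) * Ef x M n := by
        rw [Finset.sum_add_distrib, Finset.sum_range_succ (fun i => (-1 : ℝ)^(M-i) * x (n+1)^(M+1-i) * Ef x i n)]
        rw [Finset.sum_range_succ' (fun i => ((-1 : ℝ)^(M-i) * x (n+1)^(M+1-i) * Dlow (Ef x) i n) * x (n+1))]
        simp only [Dlow_zero, Dlow_succ, mul_zero, zero_mul, add_zero, Nat.sub_self, pow_zero,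
          Nat.add_sub_cancel, one_mul, pow_one]
        have e0 : M + 1 - M = 1 := by omega
        rw [e0, pow_one]
        have : ∑ i ∈ range M, (-1 : ℝ)^(M-i) * x (n+1)^(M+1-i) * Ef x i n
            + ∑ i ∈ range M, ((-1 : ℝ)^(M-(i+1)) * x (n+1)^(M+1-(i+1)) * Ef x i n) * x (n+1) = 0 := by
          rw [← Finset.sum_add_distrib]
          apply Finset.sum_eq_zero
          intro i hi
          have hiM : i < M := Finset.mem_range.mp hi
          have e1 : M - i = (M - 1 - i) + 1 := by omega
          have e2 : M + 1 - (i+1) = M - i := by omega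
          have e3 : M - (i+1) = M - 1 - i := by omega
          have e4 : M + 1 - i = (M - i) + 1 := by omega
          rw [e1, e2, e3, e4, e1, pow_succ, pow_succ, pow_succ]
          ring
        linarith [this]
      rw [h1, h2, h3, Ef_succ]
      push_cast
      ring

lemma newtonH (x : ℕ → ℝ) (n : ℕ) : ∀ m : ℕ,
    (m : ℝ) * Hf x m n = ∑ i ∈ range m, Hf x i n * Pf x (m-i) n := by
  induction n with
  | zero =>
    intro m
    cases m with
    | zero => simp
    | succ M => simp [Hf_zero', Pf_zero]
  | succ n ih =>
    intro m
    induction m with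
    | zero => simp
    | succ M ihm =>
      have expand : ∀ i ∈ range (M+1),
          Hf x i (n+1) * Pf x (M+1-i) (n+1)
          = Hf x i n * Pf x (M+1-i) n
          + (Dlow (Hf x) i (n+1) * Pf x (M+1-i) n) * x (n+1)
          + Hf x i (n+1) * x (n+1)^(M+1-i) := by
        intro i _
        rw [Pf_succ, mul_add]
        nth_rewrite 1 [Hf_succ']
        ring
      have h1 : ∑ i ∈ range (M+1), Hf x i n * Pf x (M+1-i) n = ((M:ℝ)+1) * Hf x (M+1) n := by
        have := ih (M+1); push_cast at this; rw [← this]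
      have peel1 : ∑ i ∈ range (M+1), (Dlow (Hf x) i (n+1) * Pf x (M+1-i) n) * x (n+1)
          = (∑ i ∈ range M, Hf x i (n+1) * Pf x (M-i) n) * x (n+1) := by
        rw [Finset.sum_range_succ']
        simp only [Dlow_zero, Dlow_succ, zero_mul, add_zero]
        rw [Finset.sum_mul]
        apply Finset.sum_congr rfl; intro i _
        have : M + 1 - (i+1) = M - i := by omega
        rw [this]
      have peel2 : ∑ i ∈ range (M+1), Hf x i (n+1) * x (n+1)^(M+1-i)
          = (∑ i ∈ range M, Hf x i (n+1) * x (n+1)^(M-i)) * x (n+1) + Hf x M (n+1) * x (n+1) := by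
        rw [Finset.sum_range_succ, Finset.sum_mul]
        have e0 : M + 1 - M = 1 := by omega
        rw [e0, pow_one]
        congr 1
        apply Finset.sum_congr rfl; intro i hi
        have hiM : i < M := Finset.mem_range.mp hi
        have : M + 1 - i = (M - i) + 1 := by omega
        rw [this, pow_succ]; ring
      have f1 : ∑ i ∈ range M, Hf x i (n+1) * Pf x (M-i) n
              + ∑ i ∈ range M, Hf x i (n+1) * x (n+1)^(M-i) = (M:ℝ) * Hf x M (n+1) := by
        rw [← Finset.sum_add_distrib, ihm]
        apply Finset.sum_congr rfl; intro i _
        rw [Pf_succ]; ring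
      rw [Finset.sum_congr rfl expand, Finset.sum_add_distrib, Finset.sum_add_distrib,
        h1, peel1, peel2, Hf_succ]
      push_cast
      linear_combination (-(x (n+1))) * f1

lemma sum_Icc_eq (f : ℕ → ℝ) (n : ℕ) : ∑ j ∈ Finset.Icc 1 n, f j = ∑ i ∈ range n, f (i+1) := by
  induction n with
  | zero => simp
  | succ n ih => rw [Finset.sum_Icc_succ_top (by omega), Finset.sum_range_succ, ih]

lemma Ef_eq_sum (x : ℕ → ℝ) (m n : ℕ) :
    Ef x (m+1) n = ∑ k ∈ Finset.Icc 1 n, x k * Ef x m (k-1) := by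
  induction n with
  | zero => simp [Ef_zero']
  | succ n ih =>
    rw [Ef_succ, ih, Finset.sum_Icc_succ_top (by omega)]
    simp

lemma Hf_eq_sum (x : ℕ → ℝ) (m n : ℕ) :
    Hf x (m+1) n = ∑ k ∈ Finset.Icc 1 n, x k * Hf x m k := by
  induction n with
  | zero => simp [Hf_zero']
  | succ n ih =>
    rw [Hf_succ, ih, Finset.sum_Icc_succ_top (by omega)]

lemma summable_shift (s : ℝ) (hs : 1 < s) : Summable (fun n : ℕ => 1 / ((n:ℝ)+1) ^ s) := by
  have h := (Real.summable_one_div_nat_rpow (p := s)).mpr hs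
  have h2 := (summable_nat_add_iff (f := fun n : ℕ => 1 / (n:ℝ) ^ s) 1).mpr h
  simpa using h2

section Main

variable (p : ℝ)

noncomputable def xv : ℕ → ℝ := fun k => 1 / (k : ℝ) ^ p

lemma xv_nonneg (k : ℕ) : 0 ≤ xv p k := by
  unfold xv; positivity

lemma xv_summable (hp : 1 < p) : Summable (fun k : ℕ => xv p (k+1)) := by
  have := summable_shift p hp
  unfold xv
  simpa using this

noncomputable def Cb : ℝ := ∑' k : ℕ, xv p (k+1)

lemma Cb_nonneg : 0 ≤ Cb p := tsum_nonneg (fun k => xv_nonneg p _)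

lemma xv_part_le (hp : 1 < p) (n : ℕ) : ∑ j ∈ Finset.Icc 1 n, xv p j ≤ Cb p := by
  rw [sum_Icc_eq]
  exact Summable.sum_le_tsum (range n) (fun i _ => xv_nonneg p _) (xv_summable p hp)

lemma Hf_nonneg : ∀ m n, 0 ≤ Hf (xv p) m n := by
  intro m
  induction m with
  | zero => intro n; rw [Hf_zero]; norm_num
  | succ m ih =>
    intro n
    rw [Hf_eq_sum]
    exact Finset.sum_nonneg fun k _ => mul_nonneg (xv_nonneg p k) (ih k)

lemma Ef_nonneg : ∀ m n, 0 ≤ Ef (xv p) m n := by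
  intro m
  induction m with
  | zero => intro n; rw [Ef_zero]; norm_num
  | succ m ih =>
    intro n
    rw [Ef_eq_sum]
    exact Finset.sum_nonneg fun k _ => mul_nonneg (xv_nonneg p k) (ih (k-1))

lemma Hf_le (hp : 1 < p) : ∀ m n, Hf (xv p) m n ≤ (Cb p) ^ m := by
  intro m
  induction m with
  | zero => intro n; rw [Hf_zero]; norm_num
  | succ m ih =>
    intro n
    rw [Hf_eq_sum]
    calc ∑ k ∈ Finset.Icc 1 n, xv p k * Hf (xv p) m k
        ≤ ∑ k ∈ Finset.Icc 1 n, xv p k * (Cb p) ^ m :=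
          Finset.sum_le_sum fun k _ => mul_le_mul_of_nonneg_left (ih k) (xv_nonneg p k)
      _ = (∑ k ∈ Finset.Icc 1 n, xv p k) * (Cb p) ^ m := by rw [Finset.sum_mul]
      _ ≤ Cb p * (Cb p) ^ m := by
          exact mul_le_mul_of_nonneg_right (xv_part_le p hp n) (pow_nonneg (Cb_nonneg p) m)
      _ = (Cb p) ^ (m+1) := by rw [pow_succ]; ring

lemma Ef_le (hp : 1 < p) : ∀ m n, Ef (xv p) m n ≤ (Cb p) ^ m := by
  intro m
  induction m with
  | zero => intro n; rw [Ef_zero]; norm_num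
  | succ m ih =>
    intro n
    rw [Ef_eq_sum]
    calc ∑ k ∈ Finset.Icc 1 n, xv p k * Ef (xv p) m (k-1)
        ≤ ∑ k ∈ Finset.Icc 1 n, xv p k * (Cb p) ^ m :=
          Finset.sum_le_sum fun k _ => mul_le_mul_of_nonneg_left (ih (k-1)) (xv_nonneg p k)
      _ = (∑ k ∈ Finset.Icc 1 n, xv p k) * (Cb p) ^ m := by rw [Finset.sum_mul]
      _ ≤ Cb p * (Cb p) ^ m := by
          exact mul_le_mul_of_nonneg_right (xv_part_le p hp n) (pow_nonneg (Cb_nonneg p) m)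
      _ = (Cb p) ^ (m+1) := by rw [pow_succ]; ring

lemma mh_eq : ∀ m n, mh (List.replicate m p) n = Ef (xv p) m n := by
  intro m
  induction m with
  | zero => intro n; rw [List.replicate_zero, Ef_zero]; rfl
  | succ m ih =>
    intro n
    rw [List.replicate_succ, Ef_eq_sum]
    show ∑ k ∈ Finset.Icc 1 n, (1 / (k : ℝ) ^ p) * mh (List.replicate m p) (k - 1) = _
    exact Finset.sum_congr rfl fun k _ => by rw [ih]; rfl

lemma mhStar_eq : ∀ m n, mhStar (List.replicate m p) n = Hf (xv p) m n := by
  intro m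
  induction m with
  | zero => intro n; rw [List.replicate_zero, Hf_zero]; rfl
  | succ m ih =>
    intro n
    rw [List.replicate_succ, Hf_eq_sum]
    show ∑ k ∈ Finset.Icc 1 n, (1 / (k : ℝ) ^ p) * mhStar (List.replicate m p) k = _
    exact Finset.sum_congr rfl fun k _ => by rw [ih]; rfl

lemma tendH (hp : 1 < p) : ∀ i : ℕ, Tendsto (fun N => Hf (xv p) i N) atTop
    (nhds (mzvStar (List.replicate i p))) := by
  intro i
  cases i with
  | zero =>
    simp only [Hf_zero, List.replicate_zero]
    exact tendsto_const_nhds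
  | succ i =>
    have hsummable : Summable (fun k : ℕ => xv p (k+1) * Hf (xv p) i (k+1)) := by
      apply Summable.of_nonneg_of_le
        (fun k => mul_nonneg (xv_nonneg p _) (Hf_nonneg p _ _))
        (fun k => mul_le_mul_of_nonneg_left (Hf_le p hp i (k+1)) (xv_nonneg p _))
      exact (xv_summable p hp).mul_right _
    have heq : mzvStar (List.replicate (i+1) p) = ∑' k : ℕ, xv p (k+1) * Hf (xv p) i (k+1) := by
      rw [List.replicate_succ]
      show (∑' k : ℕ, (1 / ((k : ℝ) + 1) ^ p) * mhStar (List.replicate i p) (k + 1)) = _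
      apply tsum_congr
      intro k
      rw [mhStar_eq]
      unfold xv
      push_cast
      ring
    have ht := hsummable.hasSum.tendsto_sum_nat
    rw [heq]
    convert ht using 2 with N
    rw [Hf_eq_sum, sum_Icc_eq]

lemma tendE (hp : 1 < p) : ∀ i : ℕ, Tendsto (fun N => Ef (xv p) i N) atTop
    (nhds (mzv (List.replicate i p))) := by
  intro i
  cases i with
  | zero =>
    simp only [Ef_zero, List.replicate_zero]
    exact tendsto_const_nhds
  | succ i =>
    have hsummable : Summable (fun k : ℕ => xv p (k+1) * Ef (xv p) i k) := by
      apply Summable.of_nonneg_of_le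
        (fun k => mul_nonneg (xv_nonneg p _) (Ef_nonneg p _ _))
        (fun k => mul_le_mul_of_nonneg_left (Ef_le p hp i k) (xv_nonneg p _))
      exact (xv_summable p hp).mul_right _
    have heq : mzv (List.replicate (i+1) p) = ∑' k : ℕ, xv p (k+1) * Ef (xv p) i k := by
      rw [List.replicate_succ]
      show (∑' k : ℕ, (1 / ((k : ℝ) + 1) ^ p) * mh (List.replicate i p) k) = _
      apply tsum_congr
      intro k
      rw [mh_eq]
      unfold xv
      push_cast
      ring
    have ht := hsummable.hasSum.tendsto_sum_nat
    rw [heq]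
    convert ht using 2 with N
    rw [Ef_eq_sum, sum_Icc_eq]
    simp

lemma tendP (hp : 1 < p) (k : ℕ) (hk : 1 ≤ k) : Tendsto (fun N => Pf (xv p) k N) atTop
    (nhds (rz (p * k))) := by
  have hk1 : (1:ℝ) ≤ (k:ℝ) := by exact_mod_cast hk
  have hpk : 1 < p * k := by nlinarith
  have hsum := summable_shift (p * k) hpk
  have ht := hsum.hasSum.tendsto_sum_nat
  have hrz : rz (p * k) = ∑' n : ℕ, 1 / ((n:ℝ)+1) ^ (p * k) := rfl
  rw [hrz]
  convert ht using 2 with N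
  unfold Pf
  rw [sum_Icc_eq]
  apply Finset.sum_congr rfl
  intro n _
  have h1 : (0:ℝ) ≤ (n:ℝ) + 1 := by positivity
  unfold xv
  push_cast
  rw [div_pow, one_pow, ← Real.rpow_natCast (((n:ℝ)+1) ^ p) k, ← Real.rpow_mul h1]

end Main

theorem stmt_19 (p : ℝ) (hp : 1 < p) (m : ℕ) (hm : 1 ≤ m) :
    mzvStar (List.replicate m p)
        = (1 / (m : ℝ))
            * ∑ i ∈ Finset.range m, mzvStar (List.replicate i p) * rz (p * m - p * i)
    ∧ mzv (List.replicate m p)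
        = ((-1 : ℝ) ^ (m - 1) / (m : ℝ))
            * ∑ i ∈ Finset.range m, (-1 : ℝ) ^ i * mzv (List.replicate i p) * rz (p * m - p * i) := by
  have hm0 : (m:ℝ) ≠ 0 := by
    have : 0 < m := hm
    positivity
  have hrzeq : ∀ i, i < m → rz (p * (↑(m - i) : ℝ)) = rz (p * m - p * i) := by
    intro i him
    congr 1
    rw [Nat.cast_sub him.le]
    ring
  constructor
  · -- star part
    have t1 : Tendsto (fun N => (m:ℝ) * Hf (xv p) m N) atTop
        (nhds ((m:ℝ) * mzvStar (List.replicate m p))) := (tendH p hp m).const_mul _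
    have t2 : Tendsto (fun N => ∑ i ∈ Finset.range m, Hf (xv p) i N * Pf (xv p) (m-i) N) atTop
        (nhds (∑ i ∈ Finset.range m, mzvStar (List.replicate i p) * rz (p * m - p * i))) := by
      apply tendsto_finset_sum
      intro i hi
      have him : i < m := Finset.mem_range.mp hi
      rw [← hrzeq i him]
      exact (tendH p hp i).mul (tendP p hp (m-i) (by omega))
    have hfun : (fun N => (m:ℝ) * Hf (xv p) m N)
        = fun N => ∑ i ∈ Finset.range m, Hf (xv p) i N * Pf (xv p) (m-i) N :=
      funext fun N => newtonH (xv p) N m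
    rw [hfun] at t1
    have key := tendsto_nhds_unique t1 t2
    rw [← key]
    field_simp
  · -- mzv part
    have t1 : Tendsto (fun N => (m:ℝ) * Ef (xv p) m N) atTop
        (nhds ((m:ℝ) * mzv (List.replicate m p))) := (tendE p hp m).const_mul _
    have t2 : Tendsto (fun N => ∑ i ∈ Finset.range m,
          (-1:ℝ)^(m-1-i) * Pf (xv p) (m-i) N * Ef (xv p) i N) atTop
        (nhds (∑ i ∈ Finset.range m,
          (-1:ℝ)^(m-1-i) * rz (p * m - p * i) * mzv (List.replicate i p))) := by
      apply tendsto_finset_sum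
      intro i hi
      have him : i < m := Finset.mem_range.mp hi
      rw [← hrzeq i him]
      exact (((tendP p hp (m-i) (by omega)).const_mul _).mul (tendE p hp i))
    have hfun : (fun N => (m:ℝ) * Ef (xv p) m N)
        = fun N => ∑ i ∈ Finset.range m,
          (-1:ℝ)^(m-1-i) * Pf (xv p) (m-i) N * Ef (xv p) i N :=
      funext fun N => newtonE (xv p) N m
    rw [hfun] at t1
    have key := tendsto_nhds_unique t1 t2
    have hsign : ∑ i ∈ Finset.range m,
          (-1:ℝ)^(m-1-i) * rz (p * m - p * i) * mzv (List.replicate i p)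
        = (-1:ℝ)^(m-1) * ∑ i ∈ Finset.range m,
          (-1:ℝ)^i * mzv (List.replicate i p) * rz (p * m - p * i) := by
      rw [Finset.mul_sum]
      apply Finset.sum_congr rfl
      intro i hi
      have him : i < m := Finset.mem_range.mp hi
      have e : (m-1) + i = (m-1-i) + 2*i := by omega
      have hpow : ((-1:ℝ))^(m-1) * (-1)^i = (-1)^(m-1-i) := by
        rw [← pow_add, e, pow_add, pow_mul]
        norm_num
      rw [← hpow]
      ring
    rw [hsign] at key
    rw [div_mul_eq_mul_div, eq_div_iff hm0]
    rw [← key]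
    ring
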